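/- arXiv:2401.15198 — 6 statements merged into one kernel-verified Lean document; each statement's English description precedes it below -/
import Mathlib

section
/- For any vertex V of K_{s-stab}(n,k) with s ≥ 2 and n ≥ sk+1, if m is the size of the orbit of V under cyclic rotation, then the sequence V+1, V+2, ..., V+m = V forms a cycle in K_{s-stab}(n,k) spanning all vertices of the orbit (i.e., consecutive shifts are adjacent and the orbit has exactly these m distinct vertices). -/
open Finset

/-- Cyclic distance between two elements of `ZMod n`. -/
def cycDist {n : ℕ} (i j : ZMod n) : ℕ := min (i - j).val (j - i).val

/-- `S` is a vertex of the `s`-stable Kneser graph `K_{s-stab}(n,k)`: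
a `k`-subset of `ZMod n` with all pairwise cyclic distances at least `s`. -/
def IsStable (n s k : ℕ) (S : Finset (ZMod n)) : Prop :=
  S.card = k ∧ ∀ i ∈ S, ∀ j ∈ S, i ≠ j → s ≤ cycDist i j

/-- Cyclic shift of a set by `t`. -/
def shiftSet {n : ℕ} (t : ZMod n) (S : Finset (ZMod n)) : Finset (ZMod n) :=
  S.image (· + t)

/-- The `s`-stable Kneser graph: vertices are stable `k`-subsets, edges between disjoint sets. -/
def stableKneser (n s k : ℕ) :
    SimpleGraph {S : Finset (ZMod n) // IsStable n s k S} where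
  Adj A B := A ≠ B ∧ Disjoint A.1 B.1
  symm := ⟨fun A B h => ⟨h.1.symm, h.2.symm⟩⟩
  loopless := ⟨fun A h => h.1 rfl⟩

/-- The orbit (class) of a vertex under cyclic rotation. -/
def orbitF (n : ℕ) (V : Finset (ZMod n)) : Finset (Finset (ZMod n)) :=
  (Finset.range n).image fun t : ℕ => shiftSet ((t : ZMod n)) V

lemma shiftSet_shiftSet {n : ℕ} (a b : ZMod n) (S : Finset (ZMod n)) :
    shiftSet a (shiftSet b S) = shiftSet (b + a) S := by
  unfold shiftSet
  rw [Finset.image_image]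
  congr 1
  funext x
  simp [add_assoc]

lemma shiftSet_zero {n : ℕ} (S : Finset (ZMod n)) : shiftSet 0 S = S := by
  simp [shiftSet]

lemma sh_nat_add {n : ℕ} (x y : ℕ) (S : Finset (ZMod n)) :
    shiftSet ((x + y : ℕ) : ZMod n) S = shiftSet (x : ZMod n) (shiftSet (y : ZMod n) S) := by
  rw [shiftSet_shiftSet]
  push_cast
  rw [add_comm (x : ZMod n)]

/-- Successive cyclic shifts `V+1, V+2, ..., V+m = V` (where `m` is the orbit size)
form a cycle in `K_{s-stab}(n,k)` spanning exactly the orbit of `V`. -/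
theorem stmt_3 (n s k : ℕ) (hs : 2 ≤ s) (hk : 1 ≤ k) (hn : s * k + 1 ≤ n)
    (V : Finset (ZMod n)) (hV : IsStable n s k V) :
    (∀ j : ℕ, shiftSet ((j : ℕ) : ZMod n) V ≠ shiftSet ((j + 1 : ℕ) : ZMod n) V ∧
      Disjoint (shiftSet ((j : ℕ) : ZMod n) V) (shiftSet ((j + 1 : ℕ) : ZMod n) V)) ∧
    shiftSet (((orbitF n V).card : ℕ) : ZMod n) V = V ∧
    ((Finset.range (orbitF n V).card).image
        fun j : ℕ => shiftSet ((j + 1 : ℕ) : ZMod n) V) = orbitF n V ∧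
    ((Finset.range (orbitF n V).card).image
        fun j : ℕ => shiftSet ((j + 1 : ℕ) : ZMod n) V).card = (orbitF n V).card := by
  classical
  have hsk : 2 * 1 ≤ s * k := Nat.mul_le_mul hs hk
  have hn3 : 3 ≤ n := by omega
  haveI : NeZero n := ⟨by omega⟩
  haveI : Fact (1 < n) := ⟨by omega⟩
  have hVne : V.Nonempty := Finset.card_pos.mp (by rw [hV.1]; omega)
  -- disjointness of consecutive shifts
  have hdisj : ∀ t : ZMod n, Disjoint (shiftSet t V) (shiftSet (t + 1) V) := by
    intro t
    rw [Finset.disjoint_left]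
    rintro x hx hx'
    simp only [shiftSet, Finset.mem_image] at hx hx'
    obtain ⟨a, ha, rfl⟩ := hx
    obtain ⟨b, hb, hab⟩ := hx'
    have hab' : a = b + 1 := by linear_combination -hab
    have hne : a ≠ b := by
      rw [hab']
      intro h
      have h1 : (1 : ZMod n) = 0 := by linear_combination h
      exact one_ne_zero h1
    have hcd := hV.2 a ha b hb hne
    have h1 : a - b = 1 := by rw [hab']; ring
    rw [cycDist, h1, ZMod.val_one] at hcd
    omega
  have hneq : ∀ t : ZMod n, shiftSet t V ≠ shiftSet (t + 1) V := by
    intro t h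
    have hd := hdisj t
    rw [← h] at hd
    have hne2 : (shiftSet t V).Nonempty := hVne.image _
    exact hne2.ne_empty (by simpa using disjoint_self.mp hd)
  -- period d
  have hex : ∃ t, 0 < t ∧ shiftSet ((t : ℕ) : ZMod n) V = V :=
    ⟨n, by omega, by rw [ZMod.natCast_self, shiftSet_zero]⟩
  set d := Nat.find hex with hd
  obtain ⟨hdpos, hdV⟩ : 0 < d ∧ shiftSet ((d : ℕ) : ZMod n) V = V := Nat.find_spec hex
  have hdle : d ≤ n := Nat.find_min' hex ⟨by omega, by rw [ZMod.natCast_self, shiftSet_zero]⟩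
  have hdmin : ∀ t : ℕ, 0 < t → t < d → shiftSet ((t : ℕ) : ZMod n) V ≠ V := by
    intro t ht htd h
    exact Nat.find_min hex htd ⟨ht, h⟩
  -- periodicity
  have hper : ∀ t : ℕ, shiftSet ((t + d : ℕ) : ZMod n) V = shiftSet ((t : ℕ) : ZMod n) V := by
    intro t
    rw [sh_nat_add, hdV]
  have hmod : ∀ t : ℕ, shiftSet ((t : ℕ) : ZMod n) V = shiftSet ((t % d : ℕ) : ZMod n) V := by
    intro t
    induction t using Nat.strong_induction_on with
    | _ t ih =>
      rcases lt_or_ge t d with h | h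
      · rw [Nat.mod_eq_of_lt h]
      · have h1 : t = (t - d) + d := by omega
        rw [h1, hper, Nat.add_mod_right]
        exact ih (t - d) (by omega)
  -- orbit equals image over range d
  have horb : orbitF n V = (Finset.range d).image (fun t : ℕ => shiftSet ((t : ℕ) : ZMod n) V) := by
    apply Finset.Subset.antisymm
    · intro S hS
      simp only [orbitF, Finset.mem_image, Finset.mem_range] at hS ⊢
      obtain ⟨t, ht, rfl⟩ := hS
      exact ⟨t % d, Nat.mod_lt _ hdpos, (hmod t).symm⟩
    · intro S hS
      simp only [orbitF, Finset.mem_image, Finset.mem_range] at hS ⊢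
      obtain ⟨t, ht, rfl⟩ := hS
      exact ⟨t, lt_of_lt_of_le ht hdle, rfl⟩
  have hinj : Set.InjOn (fun t : ℕ => shiftSet ((t : ℕ) : ZMod n) V) (Finset.range d) := by
    have key : ∀ a b : ℕ, a < b → b < d →
        shiftSet ((a : ℕ) : ZMod n) V = shiftSet ((b : ℕ) : ZMod n) V → False := by
      intro a b hab hbd heq
      have e1 : shiftSet (((d - a) + a : ℕ) : ZMod n) V
          = shiftSet (((d - a) + b : ℕ) : ZMod n) V := by
        rw [sh_nat_add, sh_nat_add, heq]
      have e2 : (d - a) + a = d := by omega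
      have e3 : (d - a) + b = (b - a) + d := by omega
      rw [e2, e3, hdV, hper] at e1
      exact hdmin (b - a) (by omega) (by omega) e1.symm
    intro a ha b hb hab
    simp only [Finset.coe_range, Set.mem_Iio] at ha hb
    by_contra hne'
    rcases lt_or_gt_of_ne hne' with h | h
    · exact key a b h hb hab
    · exact key b a h ha hab.symm
  have hcard : (orbitF n V).card = d := by
    rw [horb, Finset.card_image_of_injOn hinj, Finset.card_range]
  -- third claim
  have hthird : ((Finset.range d).image
      fun j : ℕ => shiftSet ((j + 1 : ℕ) : ZMod n) V)
      = (Finset.range d).image (fun t : ℕ => shiftSet ((t : ℕ) : ZMod n) V) := by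
    apply Finset.Subset.antisymm
    · intro S hS
      simp only [Finset.mem_image, Finset.mem_range] at hS ⊢
      obtain ⟨j, hj, rfl⟩ := hS
      exact ⟨(j + 1) % d, Nat.mod_lt _ hdpos, (hmod (j + 1)).symm⟩
    · intro S hS
      simp only [Finset.mem_image, Finset.mem_range] at hS ⊢
      obtain ⟨t, ht, rfl⟩ := hS
      rcases Nat.eq_zero_or_pos t with rfl | htpos
      · refine ⟨d - 1, by omega, ?_⟩
        rw [show d - 1 + 1 = d from by omega, hdV]
        simp [shiftSet_zero]
      · exact ⟨t - 1, by omega, by rw [show t - 1 + 1 = t from by omega]⟩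
  refine ⟨?_, ?_, ?_, ?_⟩
  · intro j
    have hcast : ((j + 1 : ℕ) : ZMod n) = ((j : ℕ) : ZMod n) + 1 := by push_cast; ring
    rw [hcast]
    exact ⟨hneq _, hdisj _⟩
  · rw [hcard]; exact hdV
  · rw [hcard, hthird, ← horb]
  · rw [hcard, hthird, ← horb, hcard]
end

section
/- Let s ≥ 2, k ≥ 2, and n = sk + r with r ≥ 1. If (a_1,...,a_k) is a gap sequence (each a_i ≥ s-1, sum equal to n-k) and some index i has a_{i+1} ≥ s (indices modulo k), then the classes with gap sequences (a_1,...,a_{i-1}, a_i, a_{i+1},...,a_k) and (a_1,...,a_{i-1}, a_i+1, a_{i+1}-1,...,a_k) contain disjoint representatives; i.e., these two 'friend classes' are adjacent in the class graph of K_{s-stab}(n,k). -/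
open Finset

/-- Cyclic successor of an index in `Fin k`. -/
def succIdx {k : ℕ} (i : Fin k) : Fin k := ⟨(i.1 + 1) % k, Nat.mod_lt _ i.pos⟩

/-- Cyclic rotation of a gap sequence. -/
def rotSeq {k : ℕ} (a : Fin k → ℕ) : Fin k → ℕ := fun i => a (succIdx i)

/-- Position of the `i`-th element of the vertex determined by gap sequence `a`
(starting at `0`). -/
def posOf {k : ℕ} (a : Fin k → ℕ) (i : Fin k) : ℕ :=
  ∑ j : Fin k, if (j : ℕ) < (i : ℕ) then a j + 1 else 0

/-- The vertex (starting at position `0`) with gap sequence `a`. -/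
def vertexOfGaps (n k : ℕ) (a : Fin k → ℕ) : Finset (ZMod n) :=
  Finset.univ.image fun i : Fin k => ((posOf a i : ℕ) : ZMod n)

/-- A valid gap sequence for `K_{s-stab}(n,k)`: entries at least `s-1`, summing to `n-k`. -/
def IsGapSeq (n s k : ℕ) (a : Fin k → ℕ) : Prop :=
  (∀ i, s - 1 ≤ a i) ∧ ∑ i, a i = n - k

/-- A friend move: add 1 to `a i` and subtract 1 from the cyclically next entry. -/
def FriendMove (s : ℕ) {k : ℕ} (a b : Fin k → ℕ) : Prop :=
  ∃ i : Fin k, s ≤ a (succIdx i) ∧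
    b = Function.update (Function.update a i (a i + 1)) (succIdx i) (a (succIdx i) - 1)

/-- The orbit of a gap sequence under cyclic rotation. -/
def seqOrbit {k : ℕ} (b : Fin k → ℕ) : Finset (Fin k → ℕ) :=
  (Finset.range k).image fun m => rotSeq^[m] b

lemma posOf_diff {k : ℕ} (a : Fin k → ℕ) (m m' : Fin k) (h : m'.1 ≤ m.1) :
    posOf a m = posOf a m' + ∑ j : Fin k, (if m'.1 ≤ j.1 ∧ j.1 < m.1 then a j + 1 else 0) := by
  unfold posOf
  rw [← Finset.sum_add_distrib]
  refine Finset.sum_congr rfl fun j _ => ?_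
  split_ifs <;> omega

lemma D_ge {k : ℕ} (a : Fin k → ℕ) (m m' x : Fin k) (hx : m'.1 ≤ x.1) (hx2 : x.1 < m.1) :
    a x + 1 ≤ ∑ j : Fin k, (if m'.1 ≤ j.1 ∧ j.1 < m.1 then a j + 1 else 0) := by
  have := Finset.single_le_sum
    (f := fun j : Fin k => if m'.1 ≤ j.1 ∧ j.1 < m.1 then a j + 1 else 0)
    (fun j _ => Nat.zero_le _) (Finset.mem_univ x)
  simpa [hx, hx2] using this

lemma D_le {k : ℕ} (a : Fin k → ℕ) (m m' x : Fin k)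
    (hx : ¬ (m'.1 ≤ x.1 ∧ x.1 < m.1)) :
    (∑ j : Fin k, if m'.1 ≤ j.1 ∧ j.1 < m.1 then a j + 1 else 0) + (a x + 1)
      ≤ ∑ j : Fin k, (a j + 1) := by
  have h1 : (a x + 1) = ∑ j : Fin k, (if j = x then a x + 1 else 0) := by simp
  rw [h1, ← Finset.sum_add_distrib]
  refine Finset.sum_le_sum fun j _ => ?_
  by_cases h2 : j = x
  · subst h2; rw [if_neg hx]; simp
  · rw [if_neg h2]; split <;> omega

/-- Friend classes contain disjoint representatives, i.e. friend classes are
adjacent in the class graph of `K_{s-stab}(n,k)`. -/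
theorem stmt_7 (s k r : ℕ) (hs : 2 ≤ s) (hk : 2 ≤ k) (hr : 1 ≤ r)
    (a : Fin k → ℕ) (ha : IsGapSeq (s * k + r) s k a)
    (i : Fin k) (hi : s ≤ a (succIdx i)) :
    ∃ t : ZMod (s * k + r),
      Disjoint (vertexOfGaps (s * k + r) k a)
        (shiftSet t (vertexOfGaps (s * k + r) k
          (Function.update (Function.update a i (a i + 1)) (succIdx i)
            (a (succIdx i) - 1)))) := by
  classical
  set u := succIdx i with hu
  set b := Function.update (Function.update a i (a i + 1)) u (a u - 1) with hbdef
  have hn5 : 5 ≤ s * k + r := by nlinarith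
  haveI : NeZero (s * k + r) := ⟨by omega⟩
  obtain ⟨hge, hsum⟩ := ha
  have hgap : ∀ j, s ≤ a j + 1 := fun j => by have := hge j; omega
  have hkn : k ≤ s * k + r := by nlinarith
  have hsum' : ∑ j : Fin k, (a j + 1) = s * k + r := by
    rw [Finset.sum_add_distrib, hsum]
    simp only [Finset.sum_const, Finset.card_univ, Fintype.card_fin, smul_eq_mul, mul_one]
    omega
  have hui : u ≠ i := by
    rw [hu]
    simp only [succIdx, Ne, Fin.ext_iff]
    rcases Nat.lt_or_ge (i.1 + 1) k with h | h
    · rw [Nat.mod_eq_of_lt h]; omega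
    · have hik := i.2
      have : i.1 + 1 = k := by omega
      rw [this, Nat.mod_self]; omega
  -- master lemma
  have key : ∀ m m' : Fin k,
      ((posOf a m : ℕ) : ZMod (s * k + r)) ≠
        ((posOf a m' : ℕ) : ZMod (s * k + r)) + (if m' = u then 2 else 1) := by
    intro m m' heq
    set c : ℕ := if m' = u then 2 else 1 with hc
    have hcinfo : (c = 2 ∧ m' = u) ∨ (c = 1 ∧ m' ≠ u) := by
      rw [hc]; split <;> simp_all
    have hc2 : c = 2 → s ≤ a m' := by
      intro h2
      rcases hcinfo with ⟨_, hmu⟩ | ⟨h1, _⟩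
      · rw [hmu]; exact hi
      · omega
    have hcle : 1 ≤ c ∧ c ≤ 2 := by rcases hcinfo with ⟨h, _⟩ | ⟨h, _⟩ <;> omega
    have hceq : ((posOf a m : ℕ) : ZMod (s * k + r)) =
        ((posOf a m' + c : ℕ) : ZMod (s * k + r)) := by
      rw [heq]
      push_cast
      congr 1
      rw [hc]; split <;> simp
    rcases lt_trichotomy m'.1 m.1 with hlt | hlt | hlt
    · -- m' before m
      have hd := posOf_diff a m m' (le_of_lt hlt)
      set D := ∑ j : Fin k, (if m'.1 ≤ j.1 ∧ j.1 < m.1 then a j + 1 else 0) with hD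
      have h1 : a m' + 1 ≤ D := D_ge a m m' m' (le_refl _) hlt
      have h2 : D + (a m + 1) ≤ s * k + r := by
        have := D_le a m m' m (by omega)
        rwa [hsum'] at this
      rw [hd] at hceq
      have h4 : ((D : ℕ) : ZMod (s * k + r)) = ((c : ℕ) : ZMod (s * k + r)) := by
        push_cast at hceq
        linear_combination hceq
      have h5 : D = c := by
        have hv := congrArg ZMod.val h4
        rwa [ZMod.val_cast_of_lt (by omega), ZMod.val_cast_of_lt (by omega)] at hv
      have hgm := hgap m'
      rcases hcinfo with ⟨hcv, hmu⟩ | ⟨hcv, _⟩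
      · have := hc2 hcv; omega
      · omega
    · -- equal
      have hmm : m = m' := Fin.ext hlt.symm
      subst hmm
      have h4 : ((c : ℕ) : ZMod (s * k + r)) = 0 := by
        push_cast at hceq
        linear_combination -hceq
      have h5 : (s * k + r) ∣ c := by
        rwa [ZMod.natCast_eq_zero_iff] at h4
      have := Nat.le_of_dvd (by omega) h5
      omega
    · -- m before m'
      have hd := posOf_diff a m' m (le_of_lt hlt)
      set D := ∑ j : Fin k, (if m.1 ≤ j.1 ∧ j.1 < m'.1 then a j + 1 else 0) with hD
      have h1 : a m + 1 ≤ D := D_ge a m' m m (le_refl _) hlt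
      have h2 : D + (a m' + 1) ≤ s * k + r := by
        have := D_le a m' m m' (by omega)
        rwa [hsum'] at this
      rw [hd] at hceq
      have h4 : ((D + c : ℕ) : ZMod (s * k + r)) = 0 := by
        push_cast at hceq ⊢
        linear_combination -hceq
      have h5 : (s * k + r) ∣ (D + c) := by
        rwa [ZMod.natCast_eq_zero_iff] at h4
      have h6 := Nat.le_of_dvd (by omega) h5
      have hgm := hgap m'
      rcases hcinfo with ⟨hcv, hmu⟩ | ⟨hcv, _⟩
      · have := hc2 hcv; omega
      · omega
  -- values of b
  have hau1 : 1 ≤ a u := by have := hgap u; omega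
  have hb : ∀ j : Fin k, b j = if j = u then a u - 1 else if j = i then a i + 1 else a j := by
    intro j
    by_cases h1 : j = u
    · simp [hbdef, h1, Function.update]
    · by_cases h2 : j = i <;> simp [hbdef, Function.update, h1, h2]
  -- relation between posOf b and posOf a
  have hQ : ∀ m' : Fin k, posOf b m' + (if u.1 < m'.1 then 1 else 0)
      = posOf a m' + (if i.1 < m'.1 then 1 else 0) := by
    intro m'
    unfold posOf
    rw [show (if u.1 < m'.1 then 1 else 0)
        = ∑ j : Fin k, (if j = u then (if u.1 < m'.1 then 1 else 0) else 0) by simp,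
      show (if i.1 < m'.1 then 1 else 0)
        = ∑ j : Fin k, (if j = i then (if i.1 < m'.1 then 1 else 0) else 0) by simp,
      ← Finset.sum_add_distrib, ← Finset.sum_add_distrib]
    refine Finset.sum_congr rfl fun j _ => ?_
    rw [hb j]
    by_cases h1 : j = u
    · subst h1
      simp only [if_pos rfl, if_neg hui]
      split_ifs <;> omega
    · by_cases h2 : j = i
      · subst h2
        simp only [if_neg h1, if_pos rfl, if_neg (fun h => h1 h)]
        split_ifs <;> omega
      · simp [h1, h2]
  refine ⟨if i.1 + 1 < k then 1 else 2, ?_⟩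
  rw [Finset.disjoint_left]
  rintro x hx hx'
  simp only [vertexOfGaps, shiftSet, Finset.mem_image, Finset.mem_univ, true_and] at hx hx'
  obtain ⟨m, rfl⟩ := hx
  obtain ⟨y, ⟨m', rfl⟩, hxy⟩ := hx'
  apply key m m'
  rw [← hxy]
  by_cases hcase : i.1 + 1 < k
  · -- non-wrap case
    have huv : u.1 = i.1 + 1 := by
      rw [hu]; simp [succIdx, Nat.mod_eq_of_lt hcase]
    have hQm := hQ m'
    have hmu' : (m' = u) ↔ (m'.1 = u.1) := Fin.ext_iff
    have hnat : posOf b m' = posOf a m' + (if m' = u then 1 else 0) := by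
      rcases Decidable.em (m' = u) with h | h <;>
        simp only [h, if_pos, if_neg, if_true, if_false] <;>
        split_ifs at hQm ⊢ <;> simp_all <;> omega
    rw [if_pos hcase, hnat]
    push_cast
    rcases Decidable.em (m' = u) with h | h <;> simp [h] <;> ring
  · -- wrap case
    have huv : u.1 = 0 := by
      have hik := i.2
      have : i.1 + 1 = k := by omega
      rw [hu]; simp [succIdx, this]
    have hQm := hQ m'
    have hi0 : ¬ (i.1 < m'.1) := by have := m'.2; have := i.2; omega
    rw [if_neg hi0] at hQm
    have hmu' : (m' = u) ↔ (m'.1 = 0) := by rw [Fin.ext_iff, huv]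
    rw [if_neg hcase]
    rcases Decidable.em (m' = u) with h | h
    · have h0 : ¬ (u.1 < m'.1) := by rw [← h] at huv ⊢; omega
      rw [if_neg h0] at hQm
      rw [if_pos h]
      have : posOf b m' = posOf a m' := by omega
      rw [this]
    · have h0 : u.1 < m'.1 := by
        rw [huv]
        rcases Nat.eq_zero_or_pos m'.1 with h' | h'
        · exact absurd (hmu'.2 h') h
        · exact h'
      rw [if_pos h0] at hQm
      rw [if_neg h]
      have : posOf b m' + 1 = posOf a m' := by omega
      rw [← this]
      push_cast
      ring
end

section
/- Let s ≥ 2, k ≥ 1, and n = sk + r with r ≥ 1. The graph SCK on gap-sequence classes, with edges given by the friend relation, is connected. In particular, every class is connected to the class (s-1, s-1, ..., s-1, s-1+r) by a path of friend moves. -/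
open Finset

/-- Potential: total weighted excess at positions other than `k-1`. -/
def phiPot (s k : ℕ) (a : Fin k → ℕ) : ℕ :=
  ∑ i : Fin k, if (i : ℕ) < k - 1 then (a i - (s - 1)) * ((i : ℕ) + 1) else 0

/-- Decompose a sum over `Fin k` by pulling out two distinct points. -/
lemma sum_two_points {k : ℕ} (f : Fin k → ℕ) (p j : Fin k) (hpj : j ≠ p) :
    ∑ x : Fin k, f x = f p + f j + ∑ x ∈ (univ.erase p).erase j, f x := by
  rw [← Finset.sum_erase_add _ _ (Finset.mem_univ p),
    ← Finset.sum_erase_add _ _ (Finset.mem_erase.mpr ⟨hpj, Finset.mem_univ j⟩)]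
  ring

lemma phi_zero_eq (s k r : ℕ) (hs : 2 ≤ s) (hk : 1 ≤ k) (hr : 1 ≤ r)
    (a : Fin k → ℕ) (ha : IsGapSeq (s * k + r) s k a) (h0 : phiPot s k a = 0) :
    a = fun i : Fin k => if (i : ℕ) = k - 1 then s - 1 + r else s - 1 := by
  obtain ⟨m, rfl⟩ : ∃ m, s = m + 2 := ⟨s - 2, by omega⟩
  obtain ⟨l, rfl⟩ : ∃ l, k = l + 1 := ⟨k - 1, by omega⟩
  have hsmall : ∀ i : Fin (l + 1), (i : ℕ) < l → a i = m + 1 := by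
    intro i hi
    have := Finset.sum_eq_zero_iff.mp h0 i (Finset.mem_univ i)
    simp only [show (i : ℕ) < l + 1 - 1 from by omega, if_pos] at this
    have hge := ha.1 i
    have : a i - (m + 2 - 1) = 0 := by
      rcases Nat.mul_eq_zero.mp this with h | h
      · exact h
      · omega
    omega
  funext i
  by_cases hi : (i : ℕ) < l
  · simp only [show ¬((i : ℕ) = l + 1 - 1) from by omega, if_neg, not_false_iff]
    simpa using hsmall i hi
  · have hieq : (i : ℕ) = l := by omega
    simp only [show (i : ℕ) = l + 1 - 1 from by omega, if_pos]
    have hsum := ha.2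
    rw [← Finset.sum_erase_add _ _ (Finset.mem_univ i)] at hsum
    have herase : ∑ x ∈ univ.erase i, a x = (l + 1 - 1) * (m + 1) := by
      rw [Finset.sum_congr rfl (fun x hx => ?_), Finset.sum_const, Finset.card_erase_of_mem (Finset.mem_univ i), Finset.card_univ, Fintype.card_fin, smul_eq_mul]
      have hxne : x ≠ i := (Finset.mem_erase.mp hx).1
      have : (x : ℕ) < l := by
        have := x.isLt
        have : (x : ℕ) ≠ l := fun h => hxne (Fin.ext (by omega))
        omega
      exact hsmall x this
    rw [herase] at hsum
    have hexp : (m + 2) * (l + 1) = l * (m + 1) + (m + 1) + (l + 1) := by ring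
    simp only [Nat.add_sub_cancel] at hsum ⊢
    omega

lemma step_lemma (s k r : ℕ) (hs : 2 ≤ s) (hk : 1 ≤ k) (hr : 1 ≤ r)
    (a : Fin k → ℕ) (ha : IsGapSeq (s * k + r) s k a) (hpos : phiPot s k a ≠ 0) :
    ∃ b : Fin k → ℕ, FriendMove s a b ∧ IsGapSeq (s * k + r) s k b ∧
      phiPot s k b + 1 = phiPot s k a := by
  -- find a position p with (p:ℕ) < k-1 and excess
  have : ∃ p : Fin k, (p : ℕ) < k - 1 ∧ s ≤ a p := by
    by_contra hno
    push_neg at hno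
    apply hpos
    refine Finset.sum_eq_zero fun i _ => ?_
    by_cases hi : (i : ℕ) < k - 1
    · have := hno i hi
      have := ha.1 i
      simp only [hi, if_pos]
      have : a i - (s - 1) = 0 := by omega
      simp [this]
    · simp [hi]
  obtain ⟨p, hp, hap⟩ := this
  have hk2 : 2 ≤ k := by omega
  -- the index before p
  set j : Fin k := ⟨(p.1 + k - 1) % k, Nat.mod_lt _ (by omega)⟩ with hj
  have hsucc : succIdx j = p := by
    apply Fin.ext
    simp only [succIdx, hj]
    rw [Nat.mod_add_mod]
    have : p.1 + k - 1 + 1 = p.1 + k := by omega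
    rw [this, Nat.add_mod_right, Nat.mod_eq_of_lt p.isLt]
  have hjv : (j : ℕ) = (p.1 + k - 1) % k := rfl
  have hjp : j ≠ p := by
    intro h
    apply_fun (Fin.val) at h
    rw [hjv] at h
    rcases Nat.eq_zero_or_pos p.1 with h0 | h0
    · rw [h0, Nat.zero_add, Nat.mod_eq_of_lt (by omega)] at h
      omega
    · rw [show p.1 + k - 1 = (p.1 - 1) + k from by omega, Nat.add_mod_right,
        Nat.mod_eq_of_lt (by omega : p.1 - 1 < k)] at h
      omega
  set b := Function.update (Function.update a j (a j + 1)) (succIdx j) (a (succIdx j) - 1) with hb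
  have hbp : b p = a p - 1 := by rw [hb, hsucc]; simp [Function.update]
  have hbj : b j = a j + 1 := by
    rw [hb, hsucc]
    simp [Function.update_of_ne hjp, Function.update_self]
  have hbx : ∀ x, x ≠ p → x ≠ j → b x = a x := by
    intro x hxp hxj
    rw [hb, hsucc, Function.update_of_ne hxp, Function.update_of_ne hxj]
  refine ⟨b, ⟨j, by rw [hsucc]; exact hap, hb⟩, ⟨?_, ?_⟩, ?_⟩
  · -- entries at least s-1
    intro x
    by_cases hxp : x = p
    · subst hxp; rw [hbp]; omega
    by_cases hxj : x = j
    · subst hxj; rw [hbj]; have := ha.1 j; omega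
    · rw [hbx x hxp hxj]; exact ha.1 x
  · -- sum preserved
    have h1 := sum_two_points b p j hjp
    have h2 := sum_two_points a p j hjp
    have h3 : ∑ x ∈ (univ.erase p).erase j, b x = ∑ x ∈ (univ.erase p).erase j, a x := by
      refine Finset.sum_congr rfl fun x hx => ?_
      have hx' := Finset.mem_erase.mp hx
      have hx'' := Finset.mem_erase.mp hx'.2
      exact hbx x hx''.1 hx'.1
    rw [h1, h3, hbp, hbj, ← ha.2, h2]
    omega
  · -- potential decreases by exactly 1
    unfold phiPot
    set T : (Fin k → ℕ) → Fin k → ℕ :=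
      fun c i => if (i : ℕ) < k - 1 then (c i - (s - 1)) * ((i : ℕ) + 1) else 0 with hT
    have h1 := sum_two_points (T b) p j hjp
    have h2 := sum_two_points (T a) p j hjp
    have h3 : ∑ x ∈ (univ.erase p).erase j, T b x = ∑ x ∈ (univ.erase p).erase j, T a x := by
      refine Finset.sum_congr rfl fun x hx => ?_
      have hx' := Finset.mem_erase.mp hx
      have hx'' := Finset.mem_erase.mp hx'.2
      simp only [hT, hbx x hx''.1 hx'.1]
    show (∑ x : Fin k, T b x) + 1 = ∑ x : Fin k, T a x
    rw [h1, h2, h3]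
    have hTbp : T b p = (a p - 1 - (s - 1)) * ((p : ℕ) + 1) := by
      simp only [hT, hbp, if_pos hp]
    have hTap : T a p = (a p - (s - 1)) * ((p : ℕ) + 1) := by
      simp only [hT, if_pos hp]
    -- case on whether p = 0
    rcases Nat.eq_zero_or_pos p.1 with h0 | h0
    · -- j has index k-1, so T _ j = 0
      have hjval : (j : ℕ) = k - 1 := by
        rw [hjv, show p.1 + k - 1 = k - 1 from by omega, Nat.mod_eq_of_lt (by omega)]
      have hnlt : ¬ ((j : ℕ) < k - 1) := by rw [hjval]; omega
      have hTbj : T b j = 0 := by simp only [hT, if_neg hnlt]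
      have hTaj : T a j = 0 := by simp only [hT, if_neg hnlt]
      rw [hTbp, hTap, hTbj, hTaj, h0]
      simp only [Nat.zero_add, Nat.mul_one]
      omega
    · -- j has index p-1 < k-1
      have hjval : (j : ℕ) = p.1 - 1 := by
        rw [hjv, show p.1 + k - 1 = (p.1 - 1) + k from by omega, Nat.add_mod_right,
          Nat.mod_eq_of_lt (by omega)]
      have hjlt : (j : ℕ) < k - 1 := by omega
      have hTbj : T b j = (a j + 1 - (s - 1)) * ((j : ℕ) + 1) := by
        simp only [hT, hbj, if_pos hjlt]
      have hTaj : T a j = (a j - (s - 1)) * ((j : ℕ) + 1) := by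
        simp only [hT, if_pos hjlt]
      rw [hTbp, hTap, hTbj, hTaj]
      have haj := ha.1 j
      obtain ⟨u, hu⟩ : ∃ u, a p - (s - 1) = u + 1 := ⟨a p - (s - 1) - 1, by omega⟩
      obtain ⟨v, hv⟩ : ∃ v, a j - (s - 1) = v := ⟨_, rfl⟩
      have e1 : a p - 1 - (s - 1) = u := by omega
      have e2 : a j + 1 - (s - 1) = v + 1 := by omega
      have e3 : (j : ℕ) + 1 = (p : ℕ) := by omega
      rw [e1, e2, hu, hv, e3]
      ring

lemma main_induction (s k r : ℕ) (hs : 2 ≤ s) (hk : 1 ≤ k) (hr : 1 ≤ r) :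
    ∀ N (a : Fin k → ℕ), IsGapSeq (s * k + r) s k a → phiPot s k a ≤ N →
    Relation.ReflTransGen
      (fun x y : Fin k → ℕ => FriendMove s x y ∨ FriendMove s y x ∨ y = rotSeq x)
      a (fun i : Fin k => if (i : ℕ) = k - 1 then s - 1 + r else s - 1) := by
  intro N
  induction N with
  | zero =>
    intro a ha hphi
    rw [phi_zero_eq s k r hs hk hr a ha (by omega)]
  | succ N ih =>
    intro a ha hphi
    by_cases h0 : phiPot s k a = 0
    · rw [phi_zero_eq s k r hs hk hr a ha h0]
    · obtain ⟨b, hmove, hb, hdec⟩ := step_lemma s k r hs hk hr a ha h0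
      exact Relation.ReflTransGen.head (Or.inl hmove) (ih b hb (by omega))

/-- The graph `SCK` on gap-sequence classes with edges given by the friend relation is
connected: every class is joined to the class `(s-1, ..., s-1, s-1+r)` by a path of
friend moves (in either direction, identifying sequences up to cyclic rotation). -/
theorem stmt_8 (s k r : ℕ) (hs : 2 ≤ s) (hk : 1 ≤ k) (hr : 1 ≤ r)
    (a : Fin k → ℕ) (ha : IsGapSeq (s * k + r) s k a) :
    Relation.ReflTransGen
      (fun x y : Fin k → ℕ => FriendMove s x y ∨ FriendMove s y x ∨ y = rotSeq x)
      a (fun i : Fin k => if (i : ℕ) = k - 1 then s - 1 + r else s - 1) :=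
  main_induction s k r hs hk hr (phiPot s k a) a ha le_rfl
end

section
/- Let s ≥ 2 and n = sk + r with r ≥ 1. For any class A of K_{s-stab}(n,k), the number of distinct friend classes of A is strictly less than the size of the orbit A. More precisely, if A has orbit size n/d, then A has at most k/d friend classes, and k/d < n/d. -/
open Finset

open Fin.NatCast Fin.CommRing

section Aux
variable {k : ℕ} [NeZero k]

lemma succIdx_eq (i : Fin k) : succIdx i = i + 1 := by
  ext; simp [succIdx, Fin.add_def, Fin.val_one']

lemma rotSeq_apply (a : Fin k → ℕ) (i : Fin k) : rotSeq a i = a (i + 1) := by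
  rw [rotSeq, succIdx_eq]

lemma rotSeq_iter_apply (a : Fin k → ℕ) (m : ℕ) (i : Fin k) :
    rotSeq^[m] a i = a (i + m) := by
  induction m generalizing a with
  | zero => simp
  | succ m ih =>
    rw [Function.iterate_succ_apply, ih, rotSeq_apply]
    congr 1
    push_cast
    ring

lemma rotSeq_iter_k (a : Fin k → ℕ) : rotSeq^[k] a = a := by
  funext i; rw [rotSeq_iter_apply]; simp

lemma rot_iter_mul (b : Fin k → ℕ) (q : ℕ) : rotSeq^[k * q] b = b := by
  induction q with
  | zero => rfl
  | succ q ih => rw [Nat.mul_succ, Function.iterate_add_apply, rotSeq_iter_k, ih]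

lemma rot_iter_mod (b : Fin k → ℕ) (m : ℕ) : rotSeq^[m % k] b = rotSeq^[m] b := by
  conv_rhs => rw [← Nat.div_add_mod m k, Nat.add_comm]
  rw [Function.iterate_add_apply, rot_iter_mul]

lemma seqOrbit_rot (b : Fin k → ℕ) : seqOrbit (rotSeq b) = seqOrbit b := by
  have hk := Nat.pos_of_ne_zero (NeZero.ne k)
  ext x
  simp only [seqOrbit, Finset.mem_image, Finset.mem_range]
  constructor
  · rintro ⟨m, hm, rfl⟩
    refine ⟨(m + 1) % k, Nat.mod_lt _ hk, ?_⟩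
    rw [rot_iter_mod, Function.iterate_succ_apply]
  · rintro ⟨m, hm, rfl⟩
    refine ⟨(m + k - 1) % k, Nat.mod_lt _ hk, ?_⟩
    calc rotSeq^[(m + k - 1) % k] (rotSeq b)
        = rotSeq^[(m + k - 1) % k + 1] b := (Function.iterate_succ_apply _ _ _).symm
      _ = rotSeq^[((m + k - 1) % k + 1) % k] b := (rot_iter_mod _ _).symm
      _ = rotSeq^[m] b := by
          rw [Nat.mod_add_mod, show m + k - 1 + 1 = m + k by omega, Nat.add_mod_right,
            Nat.mod_eq_of_lt hm]

lemma seqOrbit_rot_iter (b : Fin k → ℕ) (m : ℕ) : seqOrbit (rotSeq^[m] b) = seqOrbit b := by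
  induction m with
  | zero => rfl
  | succ m ih => rw [Function.iterate_succ_apply', seqOrbit_rot, ih]

def Fmap {k : ℕ} (a : Fin k → ℕ) (i : Fin k) : Fin k → ℕ :=
  Function.update (Function.update a i (a i + 1)) (succIdx i) (a (succIdx i) - 1)

lemma rot_Fmap (a : Fin k → ℕ) (i : Fin k) :
    rotSeq (Fmap a i) = Fmap (rotSeq a) (i - 1) := by
  funext j
  rw [rotSeq_apply]
  have h1 : (j + 1 = i + 1) ↔ j = i := (add_left_injective (1 : Fin k)).eq_iff
  have h2 : (j + 1 = i) ↔ j = i - 1 := (eq_sub_iff_add_eq).symm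
  simp only [Fmap, succIdx_eq, Function.update_apply, sub_add_cancel, rotSeq_apply, h1, h2]

lemma rot_iter_Fmap (a : Fin k → ℕ) (i : Fin k) (m : ℕ) :
    rotSeq^[m] (Fmap a i) = Fmap (rotSeq^[m] a) (i - (m : Fin k)) := by
  induction m generalizing a i with
  | zero => simp
  | succ m ih =>
    rw [Function.iterate_succ_apply, rot_Fmap, ih, ← Function.iterate_succ_apply]
    push_cast
    rw [sub_sub]
    ring_nf
    rw [Nat.succ_eq_one_add]

end Aux

section Main

lemma Fmap_period {k : ℕ} [NeZero k] (a : Fin k → ℕ) (p : ℕ) (hp : rotSeq^[p] a = a)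
    (i : Fin k) (t : ℕ) :
    seqOrbit (Fmap a (i - ((t * p : ℕ) : Fin k))) = seqOrbit (Fmap a i) := by
  have key : rotSeq^[t * p] a = a := by
    induction t with
    | zero => simp
    | succ t ih => rw [Nat.succ_mul, Function.iterate_add_apply, hp, ih]
  calc seqOrbit (Fmap a (i - ((t * p : ℕ) : Fin k)))
      = seqOrbit (Fmap (rotSeq^[t * p] a) (i - ((t * p : ℕ) : Fin k))) := by rw [key]
    _ = seqOrbit (rotSeq^[t * p] (Fmap a i)) := by rw [rot_iter_Fmap]
    _ = seqOrbit (Fmap a i) := seqOrbit_rot_iter _ _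

/-- A class with orbit size `n/d` (where `d` is the largest divisor of `k` such that
its gap sequence has period `k/d`) has at most `k/d` friend classes, and `k/d < n/d`;
in particular the number of friend classes is strictly less than the orbit size. -/
theorem stmt_9 (s k r d : ℕ) (hs : 2 ≤ s) (hk : 1 ≤ k) (hr : 1 ≤ r)
    (a : Fin k → ℕ) (ha : IsGapSeq (s * k + r) s k a)
    (hd : d ∣ k ∧ rotSeq^[k / d] a = a ∧
      ∀ e : ℕ, e ∣ k → rotSeq^[k / e] a = a → e ≤ d) :
    Set.ncard {C : Finset (Fin k → ℕ) | ∃ b, FriendMove s a b ∧ C = seqOrbit b} ≤ k / d ∧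
    k / d < (s * k + r) / d := by
  haveI : NeZero k := ⟨by omega⟩
  obtain ⟨hd1, hd2, hd3⟩ := hd
  have hdpos : 1 ≤ d := hd3 1 (one_dvd k) (by simpa using rotSeq_iter_k a)
  have hdk : d ≤ k := Nat.le_of_dvd (by omega) hd1
  set p := k / d with hpdef
  have hppos : 1 ≤ p := (Nat.one_le_div_iff (by omega)).mpr hdk
  have hpk : p ≤ k := Nat.div_le_self k d
  constructor
  · -- bound the number of friend classes
    set G : Fin p → Finset (Fin k → ℕ) :=
      fun j => seqOrbit (Fmap a (Fin.castLE hpk j)) with hG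
    have hsub : {C : Finset (Fin k → ℕ) | ∃ b, FriendMove s a b ∧ C = seqOrbit b}
        ⊆ Set.range G := by
      rintro C ⟨b, ⟨i, hsi, rfl⟩, rfl⟩
      have hip : i.1 % p < p := Nat.mod_lt _ (by omega)
      refine ⟨⟨i.1 % p, hip⟩, ?_⟩
      show seqOrbit (Fmap a (Fin.castLE hpk ⟨i.1 % p, hip⟩)) = _
      have hb : Function.update (Function.update a i (a i + 1)) (succIdx i)
          (a (succIdx i) - 1) = Fmap a i := rfl
      rw [hb]
      have hcast : Fin.castLE hpk ⟨i.1 % p, hip⟩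
          = i - ((i.1 / p * p : ℕ) : Fin k) := by
        rw [eq_sub_iff_add_eq]
        have hle : i.1 / p * p ≤ i.1 := Nat.div_mul_le_self _ _
        ext
        rw [Fin.add_def]
        simp only [Fin.castLE, Fin.val_natCast]
        rw [Nat.mod_eq_of_lt (show i.1 / p * p < k by omega), Nat.mod_add_div',
          Nat.mod_eq_of_lt i.isLt]
      rw [hcast, Fmap_period a p hd2]
    calc Set.ncard {C : Finset (Fin k → ℕ) | ∃ b, FriendMove s a b ∧ C = seqOrbit b}
        ≤ (Set.range G).ncard := Set.ncard_le_ncard hsub (Set.finite_range G)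
      _ = ((Finset.univ.image G : Finset (Finset (Fin k → ℕ))) : Set (Finset (Fin k → ℕ))).ncard := by
          rw [Finset.coe_image, Finset.coe_univ, Set.image_univ]
      _ = (Finset.univ.image G).card := Set.ncard_coe_finset _
      _ ≤ (Finset.univ : Finset (Fin p)).card := Finset.card_image_le
      _ = p := by simp
  · -- p < n / d
    have h2k : 2 * k ≤ s * k := Nat.mul_le_mul_right k hs
    have hpd : p * d = k := Nat.div_mul_cancel hd1
    have : p + 1 ≤ (s * k + r) / d := by
      rw [Nat.le_div_iff_mul_le (by omega)]
      have : (p + 1) * d = k + d := by rw [add_mul, one_mul, hpd]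
      omega
    omega

end Main
end

section
/- Let s ≥ 2 and n = sk + r with r ≥ 1. Every gap sequence (a_1,...,a_k) with each a_i ≥ s-1 and sum n-k can be transformed into the sequence (s-1, s-1, ..., s-1, s-1+r) by a finite sequence of friend moves (a_i, a_{i+1}) → (a_i+1, a_{i+1}-1) and their inverses, staying within valid gap sequences at every step. -/
open Finset

private lemma push_aux (s k r : ℕ) (hs : 2 ≤ s) (hk : 1 ≤ k) :
    ∀ N (a : Fin k → ℕ), (∀ i, s - 1 ≤ a i) → (∑ i, a i = (s - 1) * k + r) →
    (∑ i, a i * (k - 1 - (i : ℕ))) = N →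
    Relation.ReflTransGen
      (fun x y : Fin k → ℕ => FriendMove s x y ∨ FriendMove s y x)
      a (fun i : Fin k => if (i : ℕ) = k - 1 then s - 1 + r else s - 1) := by
  intro N
  induction N using Nat.strong_induction_on with
  | _ N ih =>
    intro a hlb hsum hPhi
    by_cases hdone : ∀ i : Fin k, (i : ℕ) < k - 1 → a i = s - 1
    · -- `a` is already the target sequence
      have hlast : (⟨k - 1, by omega⟩ : Fin k) ∈ (Finset.univ : Finset (Fin k)) :=
        Finset.mem_univ _
      set last : Fin k := ⟨k - 1, by omega⟩ with hlastdef
      have herase : ∀ l ∈ Finset.univ.erase last, a l = s - 1 := by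
        intro l hl
        have hne : l ≠ last := (Finset.mem_erase.mp hl).1
        have hlv : (l : ℕ) < k - 1 := by
          have := l.2
          rcases Nat.lt_or_ge (l : ℕ) (k - 1) with h | h
          · exact h
          · exfalso; apply hne; apply Fin.ext; simp [hlastdef]; omega
        exact hdone l hlv
      have hsum2 : a last + ∑ l ∈ Finset.univ.erase last, a l = ∑ l, a l :=
        Finset.add_sum_erase _ _ hlast
      have hsum3 : ∑ l ∈ Finset.univ.erase last, a l = (k - 1) * (s - 1) := by
        rw [Finset.sum_congr rfl herase, Finset.sum_const, smul_eq_mul]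
        congr 1
        rw [Finset.card_erase_of_mem hlast, Finset.card_univ, Fintype.card_fin]
      have hmul : (s - 1) * k = (k - 1) * (s - 1) + (s - 1) := by
        have hkk : k = (k - 1) + 1 := by omega
        calc (s - 1) * k = (s - 1) * ((k - 1) + 1) := by rw [← hkk]
          _ = (s - 1) * (k - 1) + (s - 1) := by ring
          _ = (k - 1) * (s - 1) + (s - 1) := by ring
      have halast : a last = s - 1 + r := by
        rw [hsum3, hsum] at hsum2
        set X := (k - 1) * (s - 1) with hX
        omega
      have : a = fun i : Fin k => if (i : ℕ) = k - 1 then s - 1 + r else s - 1 := by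
        funext l
        by_cases hl : (l : ℕ) = k - 1
        · have : l = last := by apply Fin.ext; simp [hlastdef, hl]
          rw [if_pos hl, this, halast]
        · have hlv : (l : ℕ) < k - 1 := by have := l.2; omega
          simp [hl, hdone l hlv]
      rw [← this]
    · push_neg at hdone
      obtain ⟨i, hi, hne⟩ := hdone
      have hai : s ≤ a i := by have := hlb i; omega
      have hik : (i : ℕ) + 1 < k := by omega
      set j : Fin k := succIdx i with hjdef
      have hj : (j : ℕ) = (i : ℕ) + 1 := by
        simp [hjdef, succIdx, Nat.mod_eq_of_lt hik]
      have hji : j ≠ i := by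
        intro h; apply absurd (congrArg Fin.val h); omega
      -- the intermediate sequence
      set a' : Fin k → ℕ :=
        fun l => if l = i then a i - 1 else if l = j then a j + 1 else a l with ha'
      have ha'i : a' i = a i - 1 := by simp [ha']
      have ha'j : a' j = a j + 1 := by simp [ha', hji]
      have hmove : FriendMove s a' a := by
        refine ⟨i, ?_, ?_⟩
        · rw [← hjdef, ha'j]; have := hlb j; omega
        · funext l
          rw [← hjdef]
          by_cases hlj : l = j
          · subst hlj
            rw [Function.update_self, ha'j]
            omega
          · rw [Function.update_of_ne hlj]
            by_cases hli : l = i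
            · subst hli
              rw [Function.update_self, ha'i]
              omega
            · rw [Function.update_of_ne hli]
              simp [ha', hli, hlj]
      have hlb' : ∀ l, s - 1 ≤ a' l := by
        intro l
        by_cases hli : l = i
        · rw [hli, ha'i]; omega
        · by_cases hlj : l = j
          · rw [hlj, ha'j]; have := hlb j; omega
          · simp only [ha', if_neg hli, if_neg hlj]; exact hlb l
      -- sum is preserved
      have hkey : ∀ l, a' l + (if l = i then 1 else 0) = a l + (if l = j then 1 else 0) := by
        intro l
        by_cases hli : l = i
        · subst hli
          rw [if_pos rfl, if_neg (fun h => hji h.symm), ha'i]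
          omega
        · by_cases hlj : l = j
          · subst hlj
            rw [if_neg (fun h => hji h), if_pos rfl, ha'j]
          · simp [ha', hli, hlj]
      have hsum' : ∑ l, a' l = (s - 1) * k + r := by
        have h1 : ∑ l, (a' l + (if l = i then 1 else 0))
            = ∑ l, (a l + (if l = j then 1 else 0)) :=
          Finset.sum_congr rfl (fun l _ => hkey l)
        rw [Finset.sum_add_distrib, Finset.sum_add_distrib,
          Finset.sum_ite_eq' Finset.univ i (fun _ => 1),
          Finset.sum_ite_eq' Finset.univ j (fun _ => 1),
          if_pos (Finset.mem_univ i), if_pos (Finset.mem_univ j), hsum] at h1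
        omega
      -- the measure strictly decreases
      have hkey2 : ∀ l, a' l * (k - 1 - (l : ℕ)) + (if l = i then k - 1 - (i : ℕ) else 0)
          = a l * (k - 1 - (l : ℕ)) + (if l = j then k - 1 - (j : ℕ) else 0) := by
        intro l
        by_cases hli : l = i
        · rw [hli, if_pos rfl, if_neg (fun h => hji h.symm), ha'i]
          have h1 : a i - 1 + 1 = a i := by omega
          calc (a i - 1) * (k - 1 - (i : ℕ)) + (k - 1 - (i : ℕ))
              = (a i - 1 + 1) * (k - 1 - (i : ℕ)) := by ring
            _ = a i * (k - 1 - (i : ℕ)) + 0 := by rw [h1, add_zero]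
        · by_cases hlj : l = j
          · subst hlj
            rw [if_neg (fun h => hji h), if_pos rfl, ha'j]
            ring
          · simp [ha', hli, hlj]
      have hPhi' : (∑ l, a' l * (k - 1 - (l : ℕ))) + (k - 1 - (i : ℕ))
          = N + (k - 1 - (j : ℕ)) := by
        have h1 : ∑ l, (a' l * (k - 1 - (l : ℕ)) + (if l = i then k - 1 - (i : ℕ) else 0))
            = ∑ l, (a l * (k - 1 - (l : ℕ)) + (if l = j then k - 1 - (j : ℕ) else 0)) :=
          Finset.sum_congr rfl (fun l _ => hkey2 l)
        rwa [Finset.sum_add_distrib, Finset.sum_add_distrib,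
          Finset.sum_ite_eq' Finset.univ i (fun _ => k - 1 - (i : ℕ)),
          Finset.sum_ite_eq' Finset.univ j (fun _ => k - 1 - (j : ℕ)),
          if_pos (Finset.mem_univ i), if_pos (Finset.mem_univ j), hPhi] at h1
      have hwlt : (∑ l, a' l * (k - 1 - (l : ℕ))) < N := by
        have hw : k - 1 - (j : ℕ) + 1 = k - 1 - (i : ℕ) := by omega
        omega
      exact Relation.ReflTransGen.head (Or.inr hmove)
        (ih _ hwlt a' hlb' hsum' rfl)

/-- Every valid gap sequence can be transformed into `(s-1, ..., s-1, s-1+r)` by a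
finite sequence of friend moves and their inverses, staying within valid gap
sequences at every step (validity is built into the friend move). -/
theorem stmt_16 (s k r : ℕ) (hs : 2 ≤ s) (hk : 1 ≤ k) (hr : 1 ≤ r)
    (a : Fin k → ℕ) (ha : IsGapSeq (s * k + r) s k a) :
    Relation.ReflTransGen
      (fun x y : Fin k → ℕ => FriendMove s x y ∨ FriendMove s y x)
      a (fun i : Fin k => if (i : ℕ) = k - 1 then s - 1 + r else s - 1) := by
  obtain ⟨hlb, hsum⟩ := ha
  have hsum' : ∑ i, a i = (s - 1) * k + r := by
    rw [hsum]
    have h : s = s - 1 + 1 := by omega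
    calc s * k + r - k = ((s - 1) + 1) * k + r - k := by rw [← h]
      _ = ((s - 1) * k + k) + r - k := by ring_nf
      _ = (s - 1) * k + r := by omega
  exact push_aux s k r hs hk _ a hlb hsum' rfl
end

section
/- For s ≥ 2 and n ≥ sk + 1, the s-stable Kneser graph K_{s-stab}(n,k) is connected. -/
open Finset

section helpers
variable {n : ℕ} [NeZero n]

lemma natCast_val' (a : ZMod n) : ((a.val : ℕ) : ZMod n) = a := ZMod.natCast_rightInverse a

lemma val_sub_of_le {x y : ZMod n} (h : y.val ≤ x.val) : (x - y).val = x.val - y.val := by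
  have hx : x - y = ((x.val - y.val : ℕ) : ZMod n) := by
    rw [Nat.cast_sub h, natCast_val', natCast_val']
  rw [hx, ZMod.val_cast_of_lt (by have := x.val_lt; omega)]

lemma val_sub_rev {x y : ZMod n} (h : y.val < x.val) : (y - x).val = n - (x.val - y.val) := by
  have hle : x.val ≤ y.val + n := by have := x.val_lt; omega
  have hx : y - x = ((y.val + n - x.val : ℕ) : ZMod n) := by
    rw [Nat.cast_sub hle, Nat.cast_add, ZMod.natCast_self, add_zero, natCast_val', natCast_val']
  rw [hx, ZMod.val_cast_of_lt (by have := y.val_lt; omega)]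
  have := y.val_lt; omega

lemma cycDist_eq {x y : ZMod n} (h : y.val < x.val) :
    cycDist x y = min (x.val - y.val) (n - (x.val - y.val)) := by
  unfold cycDist
  rw [val_sub_of_le h.le, val_sub_rev h]

lemma cycDist_comm (x y : ZMod n) : cycDist x y = cycDist y x := by
  unfold cycDist; exact min_comm _ _

lemma isStable_iff (s k : ℕ) (S : Finset (ZMod n)) :
    IsStable n s k S ↔ S.card = k ∧
      ∀ x ∈ S, ∀ y ∈ S, y.val < x.val → s ≤ x.val - y.val ∧ x.val - y.val + s ≤ n := by
  constructor
  · rintro ⟨h1, h2⟩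
    refine ⟨h1, fun x hx y hy hlt => ?_⟩
    have hne : x ≠ y := fun e => by subst e; exact lt_irrefl _ hlt
    have := h2 x hx y hy hne
    rw [cycDist_eq hlt, le_min_iff] at this
    have hxv := x.val_lt
    omega
  · rintro ⟨h1, h2⟩
    refine ⟨h1, fun i hi j hj hne => ?_⟩
    have hvne : i.val ≠ j.val := fun e => hne (ZMod.val_injective n e)
    rcases lt_or_gt_of_ne hvne with h | h
    · rw [cycDist_comm, cycDist_eq h, le_min_iff]
      have := h2 j hj i hi h
      have := j.val_lt; omega
    · rw [cycDist_eq h, le_min_iff]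
      have := h2 i hi j hj h
      have := i.val_lt; omega

lemma cycDist_add (t i j : ZMod n) : cycDist (i + t) (j + t) = cycDist i j := by
  unfold cycDist
  have h1 : i + t - (j + t) = i - j := by ring
  have h2 : j + t - (i + t) = j - i := by ring
  rw [h1, h2]

lemma shift_stable {s k : ℕ} {S : Finset (ZMod n)} (t : ZMod n) (h : IsStable n s k S) :
    IsStable n s k (shiftSet t S) := by
  obtain ⟨h1, h2⟩ := h
  constructor
  · rw [shiftSet, card_image_of_injective _ (add_left_injective t), h1]
  · intro i hi j hj hne
    simp only [shiftSet, mem_image] at hi hj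
    obtain ⟨a, ha, rfl⟩ := hi
    obtain ⟨b, hb, rfl⟩ := hj
    rw [cycDist_add]
    exact h2 a ha b hb (fun e => hne (by rw [e]))

end helpers


section graph
variable {n s k : ℕ} [NeZero n]

lemma adj_shift_one (hs : 2 ≤ s) (hk : 1 ≤ k) (hn3 : 3 ≤ n)
    (A : {S : Finset (ZMod n) // IsStable n s k S}) :
    (stableKneser n s k).Adj A ⟨shiftSet 1 A.1, shift_stable 1 A.2⟩ := by
  haveI : Fact (1 < n) := ⟨by omega⟩
  have hdisj : Disjoint A.1 (shiftSet 1 A.1) := by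
    rw [Finset.disjoint_left]
    intro x hx hx'
    simp only [shiftSet, mem_image] at hx'
    obtain ⟨y, hy, rfl⟩ := hx'
    have hne : y + 1 ≠ y := by
      intro e
      have h0 : (1 : ZMod n) = 0 := by
        have := congrArg (· - y) e
        simpa [add_sub_cancel_left] using this
      have := congrArg ZMod.val h0
      rw [ZMod.val_one, ZMod.val_zero] at this
      omega
    have h2 := A.2.2 (y + 1) hx y hy hne
    have h3 : cycDist (y + 1) y ≤ (y + 1 - y).val := min_le_left _ _
    have h4 : y + 1 - y = (1 : ZMod n) := by ring
    rw [h4, ZMod.val_one] at h3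
    omega
  refine (show _ ∧ _ from ⟨fun e => ?_, hdisj⟩)
  have h1 : A.1 = shiftSet 1 A.1 := congrArg Subtype.val e
  rw [← h1, disjoint_self] at hdisj
  have hne : A.1.Nonempty := card_pos.mp (by rw [A.2.1]; omega)
  rw [hdisj] at hne
  exact not_nonempty_empty hne

lemma reach_shift_nat (hs : 2 ≤ s) (hk : 1 ≤ k) (hn3 : 3 ≤ n)
    (A : {S : Finset (ZMod n) // IsStable n s k S}) (m : ℕ) :
    (stableKneser n s k).Reachable A ⟨shiftSet (m : ZMod n) A.1, shift_stable _ A.2⟩ := by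
  induction m with
  | zero =>
    have h : (⟨shiftSet ((0 : ℕ) : ZMod n) A.1, shift_stable _ A.2⟩ :
        {S : Finset (ZMod n) // IsStable n s k S}) = A := Subtype.ext (by simp [shiftSet])
    rw [h]
  | succ m ih =>
    have hstep := adj_shift_one hs hk hn3 (⟨shiftSet (m : ZMod n) A.1, shift_stable _ A.2⟩ :
      {S : Finset (ZMod n) // IsStable n s k S})
    have heq : shiftSet 1 (shiftSet (m : ZMod n) A.1) = shiftSet ((m + 1 : ℕ) : ZMod n) A.1 := by
      unfold shiftSet
      rw [Finset.image_image]
      apply Finset.image_congr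
      intro x _
      simp only [Function.comp]
      push_cast
      ring
    have heq' : (⟨shiftSet 1 (shiftSet (m : ZMod n) A.1),
        shift_stable 1 (shift_stable (m : ZMod n) A.2)⟩ :
        {S : Finset (ZMod n) // IsStable n s k S}) =
        ⟨shiftSet ((m + 1 : ℕ) : ZMod n) A.1, shift_stable _ A.2⟩ := Subtype.ext heq
    exact ih.trans (heq' ▸ hstep.reachable)

lemma reach_shift (hs : 2 ≤ s) (hk : 1 ≤ k) (hn3 : 3 ≤ n)
    (A : {S : Finset (ZMod n) // IsStable n s k S}) (t : ZMod n) :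
    (stableKneser n s k).Reachable A ⟨shiftSet t A.1, shift_stable _ A.2⟩ := by
  have h := reach_shift_nat hs hk hn3 A t.val
  have he : (⟨shiftSet ((t.val : ℕ) : ZMod n) A.1, shift_stable _ A.2⟩ :
      {S : Finset (ZMod n) // IsStable n s k S}) = ⟨shiftSet t A.1, shift_stable _ A.2⟩ :=
    Subtype.ext (by rw [natCast_val'])
  rwa [he] at h

end graph

section move
variable {n s k : ℕ} [NeZero n]

/-- If `A` is stable and moving `b` to `b+1` yields a stable set `A'`, they are connected. -/
lemma move_reach (hs : 2 ≤ s) (hk : 1 ≤ k) (hn3 : 3 ≤ n)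
    (A A' : {S : Finset (ZMod n) // IsStable n s k S}) (b : ZMod n) (hb : b ∈ A.1)
    (hA' : A'.1 = insert (b + 1) (A.1.erase b)) :
    (stableKneser n s k).Reachable A A' := by
  haveI : Fact (1 < n) := ⟨by omega⟩
  have hone : (1 : ZMod n).val = 1 := ZMod.val_one n
  -- key: no two elements of a stable set differ by 1
  have key : ∀ (S : Finset (ZMod n)), IsStable n s k S →
      ∀ w ∈ S, w + 1 ∉ S := by
    intro S hS w hw hw1
    have hne : w + 1 ≠ w := by
      intro e
      have h0 : (1 : ZMod n) = 0 := by
        have := congrArg (· - w) e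
        simpa [add_sub_cancel_left] using this
      have := congrArg ZMod.val h0
      rw [hone, ZMod.val_zero] at this
      omega
    have h2 := hS.2 (w + 1) hw1 w hw hne
    have h3 : cycDist (w + 1) w ≤ (w + 1 - w).val := min_le_left _ _
    have h4 : w + 1 - w = (1 : ZMod n) := by ring
    rw [h4, hone] at h3
    omega
  set M : Finset (ZMod n) := shiftSet 1 A'.1 with hM
  have hMstable : IsStable n s k M := shift_stable 1 A'.2
  have hMnonempty : M.Nonempty := card_pos.mp (by rw [hMstable.1]; omega)
  -- M disjoint from A'
  have hdMA' : Disjoint A'.1 M := by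
    rw [Finset.disjoint_left]
    intro z hz hz'
    simp only [hM, shiftSet, mem_image] at hz'
    obtain ⟨w, hw, rfl⟩ := hz'
    exact key A'.1 A'.2 w hw hz
  -- M disjoint from A
  have hdMA : Disjoint A.1 M := by
    rw [Finset.disjoint_left]
    intro z hz hz'
    simp only [hM, shiftSet, mem_image] at hz'
    obtain ⟨w, hw, rfl⟩ := hz'
    rw [hA', mem_insert, mem_erase] at hw
    rcases hw with rfl | ⟨hwne, hwA⟩
    · -- w = b + 1, so b + 2 ∈ A
      have hb2 : b + 1 + 1 ≠ b := by
        intro e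
        have h0 : (2 : ZMod n) = 0 := by
          have := congrArg (· - b) e
          rw [add_assoc] at this
          simpa [add_sub_cancel_left, one_add_one_eq_two] using this
        have h2v : (2 : ZMod n).val = 2 % n := by
          have : ((2 : ℕ) : ZMod n) = (2 : ZMod n) := by push_cast; ring
          rw [← this, ZMod.val_natCast]
        have := congrArg ZMod.val h0
        rw [h2v, Nat.mod_eq_of_lt (by omega), ZMod.val_zero] at this
        omega
      -- b+1+1 ∈ A, b+1+1 ≠ b so b+1+1 ∈ A'.1, and b+1 ∈ A'.1: contradiction
      have hmem : b + 1 + 1 ∈ A'.1 := by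
        rw [hA', mem_insert, mem_erase]
        exact Or.inr ⟨hb2, hz⟩
      have hmem1 : b + 1 ∈ A'.1 := by rw [hA']; exact mem_insert_self _ _
      exact key A'.1 A'.2 (b + 1) hmem1 hmem
    · exact key A.1 A.2 w hwA hz
  have hAne : A ≠ (⟨M, hMstable⟩ : {S : Finset (ZMod n) // IsStable n s k S}) := by
    intro e
    have h1 : A.1 = M := congrArg Subtype.val e
    rw [h1, disjoint_self] at hdMA
    rw [hdMA] at hMnonempty
    exact not_nonempty_empty hMnonempty
  have hA'ne : A' ≠ (⟨M, hMstable⟩ : {S : Finset (ZMod n) // IsStable n s k S}) := by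
    intro e
    have h1 : A'.1 = M := congrArg Subtype.val e
    rw [h1, disjoint_self] at hdMA'
    rw [hdMA'] at hMnonempty
    exact not_nonempty_empty hMnonempty
  have e1 : (stableKneser n s k).Adj A ⟨M, hMstable⟩ := show _ ∧ _ from ⟨hAne, hdMA⟩
  have e2 : (stableKneser n s k).Adj (⟨M, hMstable⟩ : {S : Finset (ZMod n) // IsStable n s k S}) A' :=
    show _ ∧ _ from ⟨fun e => hA'ne e.symm, hdMA'.symm⟩
  exact e1.reachable.trans e2.reachable

end move

section rank
variable {n s k : ℕ} [NeZero n]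

/-- Number of elements of `S` with value below that of `x`. -/
def rankf {n : ℕ} (S : Finset (ZMod n)) (x : ZMod n) : ℕ :=
  (S.filter (fun y => y.val < x.val)).card

lemma rank_mul_le (hs1 : 1 ≤ s) {S : Finset (ZMod n)} (hS : IsStable n s k S)
    {x : ZMod n} (hx : x ∈ S) : s * rankf S x ≤ x.val := by
  classical
  set R := S.filter (fun y => y.val < x.val) with hR
  have hstab := ((isStable_iff s k S).1 hS).2
  have hsep : ∀ y ∈ R, y.val + s ≤ x.val := by
    intro y hy
    rw [hR, mem_filter] at hy
    have := (hstab x hx y hy.1 hy.2).1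
    omega
  have hdiv : ∀ a b : ZMod n, a.val + s ≤ b.val → a.val / s < b.val / s := by
    intro a b h
    have h2 : (a.val + s) / s ≤ b.val / s := Nat.div_le_div_right h
    rw [Nat.add_div_right _ (by omega)] at h2
    omega
  have hcard : R.card ≤ (range (x.val / s)).card := by
    apply card_le_card_of_injOn (fun y => y.val / s)
    · intro y hy
      rw [Finset.mem_coe, mem_range]
      exact hdiv y x (hsep y hy)
    · intro y1 h1 y2 h2 he
      simp only [Finset.mem_coe] at h1 h2
      have he' : y1.val / s = y2.val / s := he
      rw [hR, mem_filter] at h1 h2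
      by_contra hne
      have hvne : y1.val ≠ y2.val := fun e => hne (ZMod.val_injective n e)
      rcases lt_or_gt_of_ne hvne with h | h
      · have := (hstab y2 h2.1 y1 h1.1 h).1
        have := hdiv y1 y2 (by omega)
        omega
      · have := (hstab y1 h1.1 y2 h2.1 h).1
        have := hdiv y2 y1 (by omega)
        omega
  rw [card_range] at hcard
  calc s * R.card ≤ s * (x.val / s) := Nat.mul_le_mul_left s hcard
    _ = x.val / s * s := mul_comm _ _
    _ ≤ x.val := Nat.div_mul_le_self _ _

end rank

section descent
variable {n s k : ℕ} [NeZero n]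

lemma descent (hs : 2 ≤ s) (hk : 1 ≤ k) (hn : s * k + 1 ≤ n)
    (A : {S : Finset (ZMod n) // IsStable n s k S}) (h0 : (0 : ZMod n) ∈ A.1)
    (x : ZMod n) (hx : x ∈ A.1) (hxbig : s * rankf A.1 x < x.val)
    (hxmin : ∀ z ∈ A.1, s * rankf A.1 z < z.val → x.val ≤ z.val) :
    ∃ A' : {S : Finset (ZMod n) // IsStable n s k S},
      (0 : ZMod n) ∈ A'.1 ∧ (∑ z ∈ A'.1, z.val) + 1 = (∑ z ∈ A.1, z.val) ∧
      (stableKneser n s k).Reachable A A' := by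
  classical
  have hn3 : 3 ≤ n := by
    have : 2 * 1 ≤ s * k := Nat.mul_le_mul hs hk
    omega
  haveI : Fact (1 < n) := ⟨by omega⟩
  have hstab := ((isStable_iff s k A.1).1 A.2).2
  set v := x.val with hv
  -- rank of x is at least 1
  set r := rankf A.1 x with hr
  have hv1 : 1 ≤ v := by omega
  have h0v : (0 : ZMod n).val = 0 := ZMod.val_zero
  have h0R : (0 : ZMod n) ∈ A.1.filter (fun y => y.val < x.val) := by
    rw [mem_filter]; exact ⟨h0, by omega⟩
  have hr1 : 1 ≤ r := by
    rw [hr, rankf]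
    exact card_pos.mpr ⟨0, h0R⟩
  have hvs : s < v := by
    have : s * 1 ≤ s * r := Nat.mul_le_mul_left s hr1
    omega
  -- the predecessor y
  obtain ⟨y, hyR, hymax⟩ := Finset.exists_max_image (A.1.filter (fun z => z.val < x.val))
    (fun z => z.val) ⟨0, h0R⟩
  have hyA : y ∈ A.1 := (mem_filter.1 hyR).1
  have hyv : y.val < v := (mem_filter.1 hyR).2
  -- y.val = s * (r - 1)
  have hy_le : y.val ≤ s * rankf A.1 y := by
    by_contra h
    push_neg at h
    exact absurd (hxmin y hyA h) (by omega)
  have hy_ge : s * rankf A.1 y ≤ y.val := rank_mul_le (by omega) A.2 hyA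
  have hranky : rankf A.1 y = r - 1 := by
    have hset : A.1.filter (fun z => z.val < y.val) =
        (A.1.filter (fun z => z.val < x.val)).erase y := by
      ext z
      rw [mem_filter, mem_erase, mem_filter]
      constructor
      · rintro ⟨hz1, hz2⟩
        refine ⟨fun e => ?_, hz1, by omega⟩
        subst e; omega
      · rintro ⟨hzne, hz1, hz2⟩
        refine ⟨hz1, ?_⟩
        have := hymax z (mem_filter.2 ⟨hz1, hz2⟩)
        have hvne : z.val ≠ y.val := fun e => hzne (ZMod.val_injective n e)
        omega
    rw [rankf, hset, card_erase_of_mem hyR]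
    rfl
  obtain ⟨r', hr'⟩ : ∃ r', r = r' + 1 := ⟨r - 1, by omega⟩
  have hranky' : rankf A.1 y = r' := by omega
  rw [hranky'] at hy_le hy_ge
  have hsr : s * r' + s = s * r := by rw [hr']; ring
  -- bound: v ≥ s * r + 1, so (v-1) - y.val ≥ s
  have hgap : y.val + s ≤ v - 1 := by omega
  -- all elements z with z.val < v satisfy z.val ≤ y.val
  have hbelow : ∀ z ∈ A.1, z.val < v → z.val ≤ y.val := by
    intro z hz hzv
    exact hymax z (mem_filter.2 ⟨hz, hzv⟩)
  -- x - 1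
  have hone : (1 : ZMod n).val = 1 := ZMod.val_one n
  have hx1val : (x - 1).val = v - 1 := by
    rw [val_sub_of_le (by omega), hone]
  have hx1notA : x - 1 ∉ A.1 := by
    intro hmem
    have := hbelow (x - 1) hmem (by omega)
    omega
  have hx1ne : x - 1 ∉ A.1.erase x := fun h => hx1notA (mem_of_mem_erase h)
  set T := insert (x - 1) (A.1.erase x) with hT
  have hcardT : T.card = k := by
    rw [hT, card_insert_of_notMem hx1ne, card_erase_of_mem hx, A.2.1]
    omega
  -- stability of T
  have hTstable : IsStable n s k T := by
    rw [isStable_iff]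
    refine ⟨hcardT, ?_⟩
    intro p hp q hq hlt
    rw [hT, mem_insert] at hp hq
    have hfacts : ∀ b ∈ A.1.erase x, b.val ≠ v - 1 ∧ b.val ≠ v := by
      intro b hb
      have hbA := mem_of_mem_erase hb
      have hbne : b ≠ x := ne_of_mem_erase hb
      have hbv : b.val ≠ v := fun e => hbne (ZMod.val_injective n e)
      refine ⟨fun e => ?_, hbv⟩
      have := hbelow b hbA (by omega)
      omega
    rcases hp with rfl | hp <;> rcases hq with rfl | hq
    · omega
    · -- p = x - 1, q ∈ erase
      obtain ⟨hq1, hq2⟩ := hfacts q hq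
      have hqA := mem_of_mem_erase hq
      rw [hx1val] at hlt ⊢
      have hqv : q.val < v := by omega
      have hql : q.val ≤ y.val := hbelow q hqA hqv
      have := hstab x hx q hqA (by omega)
      omega
    · -- q = x - 1, p ∈ erase, p.val > v - 1 hence p.val > v
      obtain ⟨hp1, hp2⟩ := hfacts p hp
      have hpA := mem_of_mem_erase hp
      rw [hx1val] at hlt ⊢
      have hpv : v < p.val := by omega
      have := hstab p hpA x hx (by omega)
      have hplt : p.val < n := p.val_lt
      -- exclude p.val - v + s = n
      omega
    · -- both in erase
      exact hstab p (mem_of_mem_erase hp) q (mem_of_mem_erase hq) hlt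
  -- 0 ∈ T
  have h0T : (0 : ZMod n) ∈ T := by
    rw [hT, mem_insert]
    right
    rw [mem_erase]
    refine ⟨fun e => ?_, h0⟩
    have := congrArg ZMod.val e
    rw [h0v] at this
    omega
  -- sum
  have hsum : (∑ z ∈ T, z.val) + 1 = ∑ z ∈ A.1, z.val := by
    rw [hT, sum_insert hx1ne, hx1val, ← Finset.sum_erase_add A.1 _ hx]
    omega
  refine ⟨⟨T, hTstable⟩, h0T, hsum, ?_⟩
  have hmove := move_reach hs hk hn3 (⟨T, hTstable⟩ :
      {S : Finset (ZMod n) // IsStable n s k S}) A (x - 1) (by show x - 1 ∈ T; rw [hT]; exact mem_insert_self _ _) ?_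
  · exact hmove.symm
  · show A.1 = insert (x - 1 + 1) (T.erase (x - 1))
    rw [hT, Finset.erase_insert hx1ne, sub_add_cancel, insert_erase hx]

end descent

section tight
variable {n s k : ℕ} [NeZero n]

/-- canonical vertex -/
def V0 (n s k : ℕ) : Finset (ZMod n) := (range k).image (fun i => ((s * i : ℕ) : ZMod n))

lemma V0_val (hs : 2 ≤ s) (hn : s * k + 1 ≤ n) {i : ℕ} (hi : i < k) :
    ((s * i : ℕ) : ZMod n).val = s * i := by
  apply ZMod.val_cast_of_lt
  have : s * (i + 1) ≤ s * k := Nat.mul_le_mul_left s (by omega)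
  rw [Nat.mul_add] at this
  omega

lemma V0_stable (hs : 2 ≤ s) (hk : 1 ≤ k) (hn : s * k + 1 ≤ n) :
    IsStable n s k (V0 n s k) := by
  rw [isStable_iff]
  constructor
  · rw [V0, card_image_of_injOn, card_range]
    intro i hi j hj he
    simp only [Finset.coe_range, Set.mem_Iio] at hi hj
    have := congrArg ZMod.val he
    rw [V0_val hs hn hi, V0_val hs hn hj] at this
    have hs0 : 0 < s := by omega
    exact Nat.eq_of_mul_eq_mul_left hs0 this
  · intro p hp q hq hlt
    rw [V0, mem_image] at hp hq
    obtain ⟨i, hi, rfl⟩ := hp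
    obtain ⟨j, hj, rfl⟩ := hq
    rw [mem_range] at hi hj
    rw [V0_val hs hn hi, V0_val hs hn hj] at hlt ⊢
    have hji : j < i := by
      by_contra h
      push_neg at h
      exact absurd (Nat.mul_le_mul_left s h) (by omega)
    have h1 : s * (j + 1) ≤ s * i := Nat.mul_le_mul_left s hji
    have h2 : s * (i + 1) ≤ s * k := Nat.mul_le_mul_left s (by omega)
    rw [Nat.mul_add] at h1 h2
    omega

lemma tight_eq (hs : 2 ≤ s) (hk : 1 ≤ k) (hn : s * k + 1 ≤ n)
    {S : Finset (ZMod n)} (hS : IsStable n s k S)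
    (hall : ∀ x ∈ S, x.val ≤ s * rankf S x) : S = V0 n s k := by
  classical
  have heq : ∀ x ∈ S, x.val = s * rankf S x := by
    intro x hx
    exact le_antisymm (hall x hx) (rank_mul_le (by omega) hS hx)
  have hrlt : ∀ x ∈ S, rankf S x < k := by
    intro x hx
    have hsub : S.filter (fun y => y.val < x.val) ⊆ S.erase x := by
      intro z hz
      rw [mem_filter] at hz
      rw [mem_erase]
      exact ⟨fun e => by subst e; omega, hz.1⟩
    have := card_le_card hsub
    rw [card_erase_of_mem hx, hS.1] at this
    rw [rankf]
    omega
  apply Finset.eq_of_subset_of_card_le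
  · intro x hx
    rw [V0, mem_image]
    refine ⟨rankf S x, mem_range.2 (hrlt x hx), ?_⟩
    rw [← heq x hx, natCast_val']
  · rw [hS.1, V0]
    calc ((range k).image _).card ≤ (range k).card := card_image_le
      _ = k := card_range k

end tight


/-- For `s ≥ 2` and `n ≥ s*k + 1`, the `s`-stable Kneser graph is connected. -/
theorem stmt_17 (n s k : ℕ) (hs : 2 ≤ s) (hn : s * k + 1 ≤ n) :
    (stableKneser n s k).Connected := by
  classical
  rcases Nat.eq_zero_or_pos k with hk0 | hk
  · -- k = 0 : only vertex is ∅
    subst hk0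
    have hne : NeZero n := ⟨by omega⟩
    rw [SimpleGraph.connected_iff]
    have hv : IsStable n s 0 (∅ : Finset (ZMod n)) := ⟨card_empty, by simp⟩
    refine ⟨?_, ⟨⟨∅, hv⟩⟩⟩
    intro A B
    have : A = B := Subtype.ext (by rw [card_eq_zero.mp A.2.1, card_eq_zero.mp B.2.1])
    rw [this]
  · have hn3 : 3 ≤ n := by
      have : 2 * 1 ≤ s * k := Nat.mul_le_mul hs hk
      omega
    haveI : NeZero n := ⟨by omega⟩
    set Vtx := {S : Finset (ZMod n) // IsStable n s k S}
    have hV0 : IsStable n s k (V0 n s k) := V0_stable hs hk hn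
    rw [SimpleGraph.connected_iff]
    refine ⟨?_, ⟨⟨V0 n s k, hV0⟩⟩⟩
    suffices H : ∀ A : Vtx, (stableKneser n s k).Reachable A ⟨V0 n s k, hV0⟩ by
      intro A B
      exact (H A).trans (H B).symm
    -- main induction
    have main : ∀ m : ℕ, ∀ B : Vtx, (0 : ZMod n) ∈ B.1 → (∑ z ∈ B.1, z.val) = m →
        (stableKneser n s k).Reachable B ⟨V0 n s k, hV0⟩ := by
      intro m
      induction m using Nat.strong_induction_on with
      | _ m ih =>
        intro B h0B hsum
        by_cases hall : ∀ x ∈ B.1, x.val ≤ s * rankf B.1 x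
        · have hBe : B.1 = V0 n s k := tight_eq hs hk hn B.2 hall
          rw [show B = (⟨V0 n s k, hV0⟩ : Vtx) from Subtype.ext hBe]
        · push_neg at hall
          obtain ⟨x0, hx0, hx0big⟩ := hall
          set C := B.1.filter (fun z => s * rankf B.1 z < z.val) with hC
          have hCne : C.Nonempty := ⟨x0, by rw [hC, mem_filter]; exact ⟨hx0, hx0big⟩⟩
          obtain ⟨x, hxC, hxmin⟩ := Finset.exists_min_image C (fun z => z.val) hCne
          rw [hC, mem_filter] at hxC
          obtain ⟨A', h0', hsum', hreach⟩ := descent hs hk hn B h0B x hxC.1 hxC.2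
            (fun z hz hzbig => hxmin z (by rw [hC, mem_filter]; exact ⟨hz, hzbig⟩))
          have hlt : (∑ z ∈ A'.1, z.val) < m := by omega
          exact hreach.trans (ih _ hlt A' h0' rfl)
    intro A
    obtain ⟨a, ha⟩ : A.1.Nonempty := card_pos.mp (by rw [A.2.1]; omega)
    have h0 : (0 : ZMod n) ∈ shiftSet (-a) A.1 := by
      rw [shiftSet, mem_image]
      exact ⟨a, ha, add_neg_cancel a⟩
    exact (reach_shift hs hk hn3 A (-a)).trans
      (main _ ⟨shiftSet (-a) A.1, shift_stable _ A.2⟩ h0 rfl)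
end
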